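/- For all positive integers a, b, t with b ≥ 3, t ≥ 2 and 1 ≤ a ≤ (b choose 2), one has M(a+b, t·b) ≥ t·(M(a,b) + b) − b. -/

import Mathlib

/-- Number of edges of a finite simple graph. -/
noncomputable def edgeCnt {V : Type} [Fintype V] (G : SimpleGraph V) : ℕ :=
  G.edgeSet.ncard

/-- Number of edges of `G` with both endpoints in `X`. -/
noncomputable def inducedEdgeCnt {V : Type} [Fintype V] (G : SimpleGraph V) (X : Finset V) : ℕ :=
  {e : Sym2 V | e ∈ G.edgeSet ∧ ∀ v ∈ e, v ∈ X}.ncard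

/-- Maximum average degree of a finite simple graph. -/
noncomputable def Mad {V : Type} [Fintype V] (G : SimpleGraph V) : ℝ :=
  sSup {d : ℝ | ∃ X : Finset V, X.Nonempty ∧ d = 2 * (inducedEdgeCnt G X : ℝ) / (X.card : ℝ)}

/-- A `k`-decomposition of the complete graph `K_n`. -/
def IsKDecomp {k n : ℕ} (G : Fin k → SimpleGraph (Fin n)) : Prop :=
  (∀ i j, i ≠ j → Disjoint (G i).edgeSet (G j).edgeSet) ∧
  (⋃ i, (G i).edgeSet) = (⊤ : SimpleGraph (Fin n)).edgeSet

/-- `M(k,n)`: maximum of `Mad(G_1)+…+Mad(G_k)` over all `k`-decompositions of `K_n`. -/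
noncomputable def MSum (k n : ℕ) : ℝ :=
  sSup {s : ℝ | ∃ G : Fin k → SimpleGraph (Fin n), IsKDecomp G ∧ s = ∑ i, Mad (G i)}

/-- `M^L(k,N)`: maximum of `Mad(G_1)+…+Mad(G_k)` over all lists of `k` finite graphs
with `N` edges in total. -/
noncomputable def MSumL (k N : ℕ) : ℝ :=
  sSup {s : ℝ | ∃ (V : Fin k → Type) (hV : ∀ i, Fintype (V i)) (G : ∀ i, SimpleGraph (V i)),
    (∑ i, @edgeCnt (V i) (hV i) (G i)) = N ∧ s = ∑ i, @Mad (V i) (hV i) (G i)}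

/-- `g(m)`: maximum of `Mad(G)` over all finite simple graphs with exactly `m` edges. -/
noncomputable def gMax (m : ℕ) : ℝ :=
  sSup {d : ℝ | ∃ (V : Type) (hV : Fintype V) (G : SimpleGraph V),
    @edgeCnt V hV G = m ∧ d = @Mad V hV G}

/-- The complete graph on the vertex subset `S` inside `Fin n`. -/
def cliqueOn {n : ℕ} (S : Finset (Fin n)) : SimpleGraph (Fin n) :=
  SimpleGraph.fromRel (fun a b => a ∈ S ∧ b ∈ S)


/-- induced subgraph on X (as graph on same vertex type) -/
def indG {V : Type} (G : SimpleGraph V) (X : Finset V) : SimpleGraph V where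
  Adj a b := G.Adj a b ∧ a ∈ X ∧ b ∈ X
  symm := ⟨by rintro a b ⟨h, ha, hb⟩; exact ⟨h.symm, hb, ha⟩⟩
  loopless := ⟨by rintro a ⟨h, _⟩; exact G.irrefl h⟩

lemma inducedEdgeCnt_eq_edgeCnt_indG {V : Type} [Fintype V] (G : SimpleGraph V) (X : Finset V) :
    inducedEdgeCnt G X = edgeCnt (indG G X) := by
  unfold inducedEdgeCnt edgeCnt
  congr 1
  ext e
  induction e with
  | _ x y =>
    simp only [Set.mem_setOf_eq, SimpleGraph.mem_edgeSet, Sym2.mem_iff, indG]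
    constructor
    · rintro ⟨h, hm⟩
      exact ⟨h, hm x (Or.inl rfl), hm y (Or.inr rfl)⟩
    · rintro ⟨h, hx, hy⟩
      refine ⟨h, ?_⟩
      rintro v (rfl | rfl) <;> assumption

lemma edgeCnt_eq_card {V : Type} [Fintype V] [DecidableEq V] (G : SimpleGraph V)
    [DecidableRel G.Adj] : edgeCnt G = G.edgeFinset.card := by
  rw [edgeCnt, ← SimpleGraph.coe_edgeFinset, Set.ncard_coe_finset]

lemma two_mul_edgeCnt {V : Type} [Fintype V] [DecidableEq V] (G : SimpleGraph V)
    [DecidableRel G.Adj] : 2 * edgeCnt G = ∑ v, G.degree v := by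
  rw [edgeCnt_eq_card, SimpleGraph.sum_degrees_eq_twice_card_edges]

lemma inducedEdgeCnt_le {V : Type} [Fintype V] (G : SimpleGraph V) (X : Finset V) :
    inducedEdgeCnt G X ≤ Fintype.card (Sym2 V) := by
  unfold inducedEdgeCnt
  have := Set.ncard_le_ncard (Set.subset_univ {e : Sym2 V | e ∈ G.edgeSet ∧ ∀ v ∈ e, v ∈ X}) (Set.toFinite _)
  simpa [Set.ncard_univ, Nat.card_eq_fintype_card] using this

lemma mad_mem_le {V : Type} [Fintype V] (G : SimpleGraph V) :
    ∀ d ∈ {d : ℝ | ∃ X : Finset V, X.Nonempty ∧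
      d = 2 * (inducedEdgeCnt G X : ℝ) / (X.card : ℝ)}, d ≤ 2 * (Fintype.card (Sym2 V) : ℝ) := by
  rintro d ⟨X, hX, rfl⟩
  have h1 : (1 : ℝ) ≤ (X.card : ℝ) := by
    exact_mod_cast Finset.card_pos.mpr hX
  have h2 : (inducedEdgeCnt G X : ℝ) ≤ (Fintype.card (Sym2 V) : ℝ) := by
    exact_mod_cast inducedEdgeCnt_le G X
  calc 2 * (inducedEdgeCnt G X : ℝ) / (X.card : ℝ)
      ≤ 2 * (inducedEdgeCnt G X : ℝ) / 1 := by
        apply div_le_div_of_nonneg_left ?_ ?_ h1 <;> positivity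
    _ = 2 * (inducedEdgeCnt G X : ℝ) := by ring
    _ ≤ 2 * (Fintype.card (Sym2 V) : ℝ) := by linarith

lemma mad_bddAbove {V : Type} [Fintype V] (G : SimpleGraph V) :
    BddAbove {d : ℝ | ∃ X : Finset V, X.Nonempty ∧
      d = 2 * (inducedEdgeCnt G X : ℝ) / (X.card : ℝ)} := by
  exact ⟨2 * (Fintype.card (Sym2 V) : ℝ), mad_mem_le G⟩

lemma le_mad {V : Type} [Fintype V] (G : SimpleGraph V) (X : Finset V) (hX : X.Nonempty) :
    2 * (inducedEdgeCnt G X : ℝ) / (X.card : ℝ) ≤ Mad G :=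
  le_csSup (mad_bddAbove G) ⟨X, hX, rfl⟩

lemma mad_le {V : Type} [Fintype V] [Nonempty V] (G : SimpleGraph V) :
    Mad G ≤ 2 * (Fintype.card (Sym2 V) : ℝ) :=
  csSup_le ⟨_, ⟨Finset.univ, Finset.univ_nonempty, rfl⟩⟩ (mad_mem_le G)


def pj (t b : ℕ) : Fin (t * b) → Fin b := fun x => (finProdFinEquiv.symm x).2

lemma sum_pj (t b : ℕ) (f : Fin b → ℕ) :
    ∑ x : Fin (t * b), f (pj t b x) = t * ∑ u, f u := by
  rw [← Fintype.sum_equiv (finProdFinEquiv : Fin t × Fin b ≃ Fin (t * b))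
      (fun z => f z.2) (fun x => f (pj t b x)) ?_]
  · rw [Fintype.sum_prod_type]
    simp [Finset.sum_const, Finset.card_univ, mul_comm]
  · intro z
    simp [pj]

lemma card_preimage (t b : ℕ) (X : Finset (Fin b)) :
    (Finset.univ.filter fun x => pj t b x ∈ X).card = t * X.card := by
  classical
  rw [Finset.card_filter]
  rw [sum_pj t b (fun u => if u ∈ X then 1 else 0)]
  congr 1
  simp [Finset.card_filter]

lemma degree_comap (t b : ℕ) (B : SimpleGraph (Fin b)) [DecidableRel B.Adj]
    (x : Fin (t * b)) :
    (B.comap (pj t b)).degree x = t * B.degree (pj t b x) := by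
  classical
  rw [← SimpleGraph.card_neighborFinset_eq_degree, ← SimpleGraph.card_neighborFinset_eq_degree]
  have h1 : (B.comap (pj t b)).neighborFinset x
      = Finset.univ.filter (fun y => B.Adj (pj t b x) (pj t b y)) := by
    ext y; simp [SimpleGraph.mem_neighborFinset]
  have h2 : B.neighborFinset (pj t b x) = Finset.univ.filter (fun u => B.Adj (pj t b x) u) := by
    ext u; simp [SimpleGraph.mem_neighborFinset]
  rw [h1, h2, Finset.card_filter, Finset.card_filter,
    sum_pj t b (fun u => if B.Adj (pj t b x) u then 1 else 0)]

lemma edgeCnt_comap (t b : ℕ) (B : SimpleGraph (Fin b)) [DecidableRel B.Adj] :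
    edgeCnt (B.comap (pj t b)) = t * t * edgeCnt B := by
  classical
  have hc := two_mul_edgeCnt (B.comap (pj t b))
  have hB := two_mul_edgeCnt B
  have key : ∑ x, (B.comap (pj t b)).degree x = t * (t * ∑ u, B.degree u) := by
    calc ∑ x, (B.comap (pj t b)).degree x
        = ∑ x : Fin (t * b), t * B.degree (pj t b x) :=
          Finset.sum_congr rfl fun x _ => degree_comap t b B x
      _ = t * ∑ x : Fin (t * b), B.degree (pj t b x) := by rw [Finset.mul_sum]
      _ = t * (t * ∑ u, B.degree u) := by rw [sum_pj t b (fun u => B.degree u)]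
  rw [key, ← hB] at hc
  have : 2 * edgeCnt (B.comap (pj t b)) = 2 * (t * t * edgeCnt B) := by rw [hc]; ring
  omega

lemma indG_comap (t b : ℕ) (B : SimpleGraph (Fin b)) (X : Finset (Fin b)) :
    indG (B.comap (pj t b)) (Finset.univ.filter fun x => pj t b x ∈ X)
      = (indG B X).comap (pj t b) := by
  ext x y
  simp [indG, SimpleGraph.comap]

lemma inducedEdgeCnt_comap (t b : ℕ) (B : SimpleGraph (Fin b)) (X : Finset (Fin b)) :
    inducedEdgeCnt (B.comap (pj t b)) (Finset.univ.filter fun x => pj t b x ∈ X)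
      = t * t * inducedEdgeCnt B X := by
  classical
  rw [inducedEdgeCnt_eq_edgeCnt_indG, inducedEdgeCnt_eq_edgeCnt_indG, indG_comap,
    edgeCnt_comap]

lemma mad_comap (t b : ℕ) (ht : 1 ≤ t) (hb : 1 ≤ b) (B : SimpleGraph (Fin b)) :
    (t : ℝ) * Mad B ≤ Mad (B.comap (pj t b)) := by
  have htR : (0 : ℝ) < (t : ℝ) := by exact_mod_cast ht
  rw [mul_comm, ← le_div_iff₀ htR]
  apply csSup_le
  · have : Nonempty (Fin b) := ⟨⟨0, hb⟩⟩
    exact ⟨_, ⟨Finset.univ, Finset.univ_nonempty, rfl⟩⟩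
  rintro d ⟨X, hX, rfl⟩
  have hXc : (0 : ℝ) < (X.card : ℝ) := by exact_mod_cast Finset.card_pos.mpr hX
  have hX' : (Finset.univ.filter fun x => pj t b x ∈ X).Nonempty := by
    apply Finset.card_pos.mp
    rw [card_preimage]
    exact Nat.mul_pos ht (Finset.card_pos.mpr hX)
  have h := le_mad (B.comap (pj t b)) _ hX'
  rw [inducedEdgeCnt_comap, card_preimage] at h
  calc 2 * (inducedEdgeCnt B X : ℝ) / (X.card : ℝ)
      = 2 * ((t * t * inducedEdgeCnt B X : ℕ) : ℝ) / ((t * X.card : ℕ) : ℝ) / (t : ℝ) := by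
        push_cast
        field_simp
    _ ≤ Mad (B.comap (pj t b)) / (t : ℝ) := by gcongr


def Kfib (t b : ℕ) (j : Fin b) : SimpleGraph (Fin (t * b)) where
  Adj x y := x ≠ y ∧ pj t b x = j ∧ pj t b y = j
  symm := ⟨by rintro x y ⟨h, hx, hy⟩; exact ⟨h.symm, hy, hx⟩⟩
  loopless := ⟨by rintro x ⟨h, _⟩; exact h rfl⟩

instance kfibDec (t b : ℕ) (j : Fin b) : DecidableRel (Kfib t b j).Adj :=
  fun x y => decidable_of_iff (x ≠ y ∧ pj t b x = j ∧ pj t b y = j) Iff.rfl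

lemma kfib_degree (t b : ℕ) (j : Fin b) (x : Fin (t * b)) :
    (Kfib t b j).degree x = if pj t b x = j then t - 1 else 0 := by
  classical
  rw [← SimpleGraph.card_neighborFinset_eq_degree]
  by_cases hx : pj t b x = j
  · rw [if_pos hx]
    have : (Kfib t b j).neighborFinset x
        = (Finset.univ.filter fun y => pj t b y ∈ ({j} : Finset (Fin b))).erase x := by
      ext y
      rw [SimpleGraph.mem_neighborFinset]
      simp only [SimpleGraph.mem_neighborFinset, Kfib, Finset.mem_erase, Finset.mem_filter,
        Finset.mem_univ, true_and, Finset.mem_singleton]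
      constructor
      · rintro ⟨h1, _, h3⟩; exact ⟨fun hh => h1 hh.symm, h3⟩
      · rintro ⟨h1, h2⟩; exact ⟨fun hh => h1 hh.symm, hx, h2⟩
    rw [this, Finset.card_erase_of_mem (by simp [hx])]
    rw [card_preimage]
    simp
  · rw [if_neg hx]
    have : (Kfib t b j).neighborFinset x = ∅ := by
      ext y
      rw [SimpleGraph.mem_neighborFinset]
      simp only [SimpleGraph.mem_neighborFinset, Kfib, Finset.notMem_empty, iff_false]
      rintro ⟨_, h2, _⟩; exact hx h2
    simp [this]

lemma kfib_edgeCnt (t b : ℕ) (j : Fin b) :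
    2 * edgeCnt (Kfib t b j) = t * (t - 1) := by
  classical
  rw [two_mul_edgeCnt]
  calc ∑ x, (Kfib t b j).degree x
      = ∑ x : Fin (t * b), (fun u => if u = j then t - 1 else 0) (pj t b x) :=
        Finset.sum_congr rfl fun x _ => kfib_degree t b j x
    _ = t * ∑ u, (fun u => if u = j then t - 1 else 0) u :=
        sum_pj t b (fun u => if u = j then t - 1 else 0)
    _ = t * (t - 1) := by simp

lemma mad_kfib (t b : ℕ) (ht : 1 ≤ t) (j : Fin b) :
    (t : ℝ) - 1 ≤ Mad (Kfib t b j) := by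
  have htR : (0 : ℝ) < (t : ℝ) := by exact_mod_cast ht
  have hX' : (Finset.univ.filter fun x => pj t b x ∈ ({j} : Finset (Fin b))).Nonempty := by
    apply Finset.card_pos.mp
    rw [card_preimage]
    simpa using (show 0 < t by omega)
  have h := le_mad (Kfib t b j) _ hX'
  have hind : inducedEdgeCnt (Kfib t b j)
      (Finset.univ.filter fun x => pj t b x ∈ ({j} : Finset (Fin b)))
      = edgeCnt (Kfib t b j) := by
    rw [inducedEdgeCnt_eq_edgeCnt_indG]
    congr 1
    ext x y
    simp only [indG, Kfib, Finset.mem_filter, Finset.mem_univ, true_and, Finset.mem_singleton]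
    tauto
  rw [hind, card_preimage] at h
  have hcast : 2 * (edgeCnt (Kfib t b j) : ℝ) = (t : ℝ) * ((t : ℝ) - 1) := by
    have := kfib_edgeCnt t b j
    have h2 := congrArg (fun n : ℕ => (n : ℝ)) this
    push_cast [Nat.cast_sub ht] at h2
    linarith
  calc (t : ℝ) - 1 = 2 * (edgeCnt (Kfib t b j) : ℝ) / ((t * ({j} : Finset (Fin b)).card : ℕ) : ℝ) := by
        rw [hcast]
        simp
        field_simp
    _ ≤ Mad (Kfib t b j) := h

lemma decompSet_nonempty (k n : ℕ) (hk : 1 ≤ k) :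
    {s : ℝ | ∃ G : Fin k → SimpleGraph (Fin n), IsKDecomp G ∧ s = ∑ i, Mad (G i)}.Nonempty := by
  classical
  refine ⟨_, fun i => if i = (⟨0, hk⟩ : Fin k) then ⊤ else ⊥, ⟨?_, ?_⟩, rfl⟩
  · intro i j hij
    rcases eq_or_ne i (⟨0, hk⟩ : Fin k) with hi | hi
    · have hj : j ≠ (⟨0, hk⟩ : Fin k) := by rw [← hi]; exact hij.symm
      simp [hi, hj]
    · simp [hi]
  · apply Set.eq_of_subset_of_subset
    · apply Set.iUnion_subset
      intro i
      by_cases hi : i = (⟨0, hk⟩ : Fin k) <;> simp [hi]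
    · intro e he
      apply Set.mem_iUnion.mpr ⟨⟨0, hk⟩, by simpa using he⟩

lemma decompSet_bddAbove (k n : ℕ) (hn : 1 ≤ n) :
    BddAbove {s : ℝ | ∃ G : Fin k → SimpleGraph (Fin n), IsKDecomp G ∧ s = ∑ i, Mad (G i)} := by
  have : Nonempty (Fin n) := ⟨⟨0, hn⟩⟩
  refine ⟨(k : ℝ) * (2 * (Fintype.card (Sym2 (Fin n)) : ℝ)), ?_⟩
  rintro s ⟨G, hG, rfl⟩
  calc ∑ i, Mad (G i) ≤ ∑ _i : Fin k, 2 * (Fintype.card (Sym2 (Fin n)) : ℝ) :=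
        Finset.sum_le_sum fun i _ => mad_le (G i)
    _ = (k : ℝ) * (2 * (Fintype.card (Sym2 (Fin n)) : ℝ)) := by
        rw [Finset.sum_const, Finset.card_univ, Fintype.card_fin, nsmul_eq_mul]

theorem madSum_main (a b t : ℕ) (hb : 3 ≤ b) (ht : 2 ≤ t) (ha : 1 ≤ a) :
    MSum (a + b) (t * b) ≥ (t : ℝ) * (MSum a b + (b : ℝ)) - (b : ℝ) := by
  have htb : 1 ≤ t * b := le_trans (by norm_num) (Nat.mul_le_mul ht hb)
  have htR : (0 : ℝ) < (t : ℝ) := by positivity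
  have key : ∀ s ∈ {s : ℝ | ∃ G : Fin a → SimpleGraph (Fin b), IsKDecomp G ∧ s = ∑ i, Mad (G i)},
      (t : ℝ) * s + ((t : ℝ) - 1) * (b : ℝ) ≤ MSum (a + b) (t * b) := by
    rintro s ⟨G, hG, rfl⟩
    set H : Fin (a + b) → SimpleGraph (Fin (t * b)) := fun i =>
      if h : (i : ℕ) < a then (G ⟨i, h⟩).comap (pj t b)
      else Kfib t b ⟨(i : ℕ) - a, by omega⟩ with hH
    have hHlt : ∀ (i : Fin (a + b)) (h : (i : ℕ) < a), H i = (G ⟨i, h⟩).comap (pj t b) := by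
      intro i h; simp [hH, h]
    have hHge : ∀ (i : Fin (a + b)) (h : ¬ (i : ℕ) < a),
        H i = Kfib t b ⟨(i : ℕ) - a, by omega⟩ := by
      intro i h; simp [hH, h]
    have hdecomp : IsKDecomp H := by
      constructor
      · intro i j hij
        rw [Set.disjoint_left]
        intro e hei hej
        induction e with
        | _ x y =>
          rw [SimpleGraph.mem_edgeSet] at hei hej
          by_cases hi : (i : ℕ) < a <;> by_cases hj : (j : ℕ) < a
          · rw [hHlt i hi] at hei; rw [hHlt j hj] at hej
            have hne : (⟨(i : ℕ), hi⟩ : Fin a) ≠ ⟨(j : ℕ), hj⟩ := by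
              intro hc
              exact hij (Fin.ext (Fin.mk_eq_mk.mp hc))
            have := hG.1 _ _ hne
            rw [Set.disjoint_left] at this
            exact this ((G _).mem_edgeSet.mpr hei) ((G _).mem_edgeSet.mpr hej)
          · rw [hHlt i hi] at hei; rw [hHge j hj] at hej
            exact (SimpleGraph.comap_adj.mp hei).ne (hej.2.1.trans hej.2.2.symm)
          · rw [hHge i hi] at hei; rw [hHlt j hj] at hej
            exact (SimpleGraph.comap_adj.mp hej).ne (hei.2.1.trans hei.2.2.symm)
          · rw [hHge i hi] at hei; rw [hHge j hj] at hej
            have h1 := hei.2.1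
            have h2 := hej.2.1
            rw [h1] at h2
            have : (i : ℕ) - a = (j : ℕ) - a := congrArg Fin.val h2
            have : (i : ℕ) = (j : ℕ) := by omega
            exact hij (Fin.ext this)
      · apply Set.eq_of_subset_of_subset
        · apply Set.iUnion_subset
          intro i e he
          induction e with
          | _ x y =>
            rw [SimpleGraph.mem_edgeSet] at he
            rw [SimpleGraph.mem_edgeSet, SimpleGraph.top_adj]
            by_cases hi : (i : ℕ) < a
            · rw [hHlt i hi] at he
              intro hc; exact (SimpleGraph.comap_adj.mp he).ne (congrArg (pj t b) hc)
            · rw [hHge i hi] at he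
              exact he.1
        · intro e he
          induction e with
          | _ x y =>
            rw [SimpleGraph.mem_edgeSet, SimpleGraph.top_adj] at he
            rw [Set.mem_iUnion]
            by_cases hp : pj t b x = pj t b y
            · refine ⟨⟨a + (pj t b x : ℕ), by omega⟩, ?_⟩
              rw [SimpleGraph.mem_edgeSet, hHge _ (by simp)]
              refine ⟨he, ?_, ?_⟩
              · exact Fin.ext (by simp)
              · exact Fin.ext (by simp [← hp])
            · have : s(pj t b x, pj t b y) ∈ (⊤ : SimpleGraph (Fin b)).edgeSet := by
                rw [SimpleGraph.mem_edgeSet, SimpleGraph.top_adj]; exact hp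
              rw [← hG.2, Set.mem_iUnion] at this
              obtain ⟨i', hi'⟩ := this
              rw [SimpleGraph.mem_edgeSet] at hi'
              refine ⟨⟨(i' : ℕ), by omega⟩, ?_⟩
              rw [SimpleGraph.mem_edgeSet, hHlt _ (i'.isLt)]
              simpa using hi'
    have hsum : (t : ℝ) * (∑ i, Mad (G i)) + ((t : ℝ) - 1) * (b : ℝ) ≤ ∑ i, Mad (H i) := by
      rw [Fin.sum_univ_add (fun i => Mad (H i))]
      have e1 : ∀ i : Fin a, H (Fin.castAdd b i) = (G i).comap (pj t b) := by
        intro i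
        have hlt : ((Fin.castAdd b i : Fin (a + b)) : ℕ) < a := by simp
        rw [hHlt _ hlt]
        have hval : (⟨((Fin.castAdd b i : Fin (a + b)) : ℕ), hlt⟩ : Fin a) = i :=
          Fin.ext (by simp)
        rw [hval]
      have e2 : ∀ j : Fin b, H (Fin.natAdd a j) = Kfib t b j := by
        intro j
        rw [hHge _ (by simp)]
        congr 1
        exact Fin.ext (by simp)
      have s1 : (t : ℝ) * (∑ i, Mad (G i)) ≤ ∑ i : Fin a, Mad (H (Fin.castAdd b i)) := by
        rw [Finset.mul_sum]
        apply Finset.sum_le_sum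
        intro i _
        rw [e1 i]
        exact mad_comap t b (by omega) (by omega) (G i)
      have s2 : ((t : ℝ) - 1) * (b : ℝ) ≤ ∑ j : Fin b, Mad (H (Fin.natAdd a j)) := by
        have : ∑ j : Fin b, ((t : ℝ) - 1) ≤ ∑ j : Fin b, Mad (H (Fin.natAdd a j)) := by
          apply Finset.sum_le_sum
          intro j _
          rw [e2 j]
          exact mad_kfib t b (by omega) j
        calc ((t : ℝ) - 1) * (b : ℝ) = ∑ _j : Fin b, ((t : ℝ) - 1) := by
              rw [Finset.sum_const, Finset.card_univ, Fintype.card_fin, nsmul_eq_mul]; ring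
          _ ≤ _ := this
      linarith
    calc (t : ℝ) * (∑ i, Mad (G i)) + ((t : ℝ) - 1) * (b : ℝ) ≤ ∑ i, Mad (H i) := hsum
      _ ≤ MSum (a + b) (t * b) :=
          le_csSup (decompSet_bddAbove (a + b) (t * b) htb) ⟨H, hdecomp, rfl⟩
  have hS : MSum a b ≤ (MSum (a + b) (t * b) - ((t : ℝ) - 1) * (b : ℝ)) / (t : ℝ) := by
    apply csSup_le (decompSet_nonempty a b ha)
    intro s hs
    have := key s hs
    rw [le_div_iff₀ htR]
    linarith
  rw [ge_iff_le]
  rw [le_div_iff₀ htR] at hS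
  have heq : (t : ℝ) * (MSum a b + (b : ℝ)) - (b : ℝ)
      = MSum a b * (t : ℝ) + ((t : ℝ) - 1) * (b : ℝ) := by ring
  rw [heq]
  linarith


/-- recursive lower bound `M(a+b, t·b) ≥ t·(M(a,b)+b) − b`. -/
theorem madSum_recursive_lower (a b t : ℕ) (hb : 3 ≤ b) (ht : 2 ≤ t) (ha : 1 ≤ a)
    (hab : a ≤ Nat.choose b 2) :
    MSum (a + b) (t * b) ≥ (t : ℝ) * (MSum a b + (b : ℝ)) - (b : ℝ) :=
  madSum_main a b t hb ht ha
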